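/- If X, S, D are convex sets, then for any a ∈ [0,1] and b ∈ [0,1], Pre(a·X, b·S, b·D) + Pre((1−a)·X, (1−b)·S, (1−b)·D) ⊆ Pre(X, S, D). -/

import Mathlib

open Pointwise

/-- One-step backward reachable set for the linear system x⁺ = Ax + Bu + Ed. -/
def Pre {n m l : ℕ} (A : Matrix (Fin n) (Fin n) ℝ) (B : Matrix (Fin n) (Fin m) ℝ)
    (E : Matrix (Fin n) (Fin l) ℝ) (X : Set (Fin n → ℝ))
    (S : Set ((Fin n → ℝ) × (Fin m → ℝ))) (D : Set (Fin l → ℝ)) : Set (Fin n → ℝ) :=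
  {x | ∃ u, (x, u) ∈ S ∧ ∀ d ∈ D, A.mulVec x + B.mulVec u + E.mulVec d ∈ X}

theorem pre_convex_decomposition {n m l : ℕ} (A : Matrix (Fin n) (Fin n) ℝ)
    (B : Matrix (Fin n) (Fin m) ℝ) (E : Matrix (Fin n) (Fin l) ℝ)
    (X : Set (Fin n → ℝ)) (S : Set ((Fin n → ℝ) × (Fin m → ℝ))) (D : Set (Fin l → ℝ))
    (hX : Convex ℝ X) (hS : Convex ℝ S) (hD : Convex ℝ D)
    {a b : ℝ} (ha : a ∈ Set.Icc (0 : ℝ) 1) (hb : b ∈ Set.Icc (0 : ℝ) 1) :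
    Pre A B E (a • X) (b • S) (b • D) +
      Pre A B E ((1 - a) • X) ((1 - b) • S) ((1 - b) • D) ⊆ Pre A B E X S D := by
  rintro x ⟨x₁, ⟨u₁, hS₁, hX₁⟩, x₂, ⟨u₂, hS₂, hX₂⟩, rfl⟩
  refine ⟨u₁ + u₂, ?_, ?_⟩
  · obtain ⟨s₁, hs₁, hes₁⟩ := hS₁
    obtain ⟨s₂, hs₂, hes₂⟩ := hS₂
    have := hS hs₁ hs₂ (show (0:ℝ) ≤ b from hb.1) (show (0:ℝ) ≤ 1 - b by linarith [hb.2]) (show b + (1 - b) = 1 by ring)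
    simp only [] at hes₁ hes₂
    rw [hes₁, hes₂] at this
    convert this using 1
    rfl
  · intro d hd
    have hd₁ : b • d ∈ b • D := ⟨d, hd, rfl⟩
    have hd₂ : (1 - b) • d ∈ (1 - b) • D := ⟨d, hd, rfl⟩
    obtain ⟨y₁, hy₁, hey₁⟩ := hX₁ _ hd₁
    obtain ⟨y₂, hy₂, hey₂⟩ := hX₂ _ hd₂
    have hmem := hX hy₁ hy₂ (show (0:ℝ) ≤ a from ha.1) (show (0:ℝ) ≤ 1 - a by linarith [ha.2]) (show a + (1 - a) = 1 by ring)
    simp only [] at hey₁ hey₂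
    rw [hey₁, hey₂] at hmem
    convert hmem using 1
    simp only [Matrix.mulVec_add, Matrix.mulVec_smul]
    have : d = b • d + (1 - b) • d := by
      rw [← add_smul]; ring_nf; simp
    nth_rewrite 1 [this]
    rw [Matrix.mulVec_add, Matrix.mulVec_smul, Matrix.mulVec_smul]
    abel
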